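/- Let C be a category and let σ_n ∈ N_nC, ω_{n+2} ∈ N_{n+2}C with d_{n+2,i} ω_{n+2} = s_{n,j} σ_n for some 0 ≤ i ≤ j ≤ n. Then there exists a unique ζ_{n+1} ∈ N_{n+1}C such that d_{n+1,i} ζ_{n+1} = σ_n and s_{n+1,j+1} ζ_{n+1} = ω_{n+2}. -/

import Mathlib

open CategoryTheory Simplicial

private lemma map_eq_helper {C : Type*} [Category C] {m : ℕ} (F : Fin m ⥤ C) {a b a' b' : Fin m}
    (pa : a = a') (pb : b = b') (h : a ≤ b) (h' : a' ≤ b') :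
    F.map (homOfLE h) = eqToHom (by rw [pa]) ≫ F.map (homOfLE h') ≫ eqToHom (by rw [pb]) := by
  subst pa; subst pb; simp

private lemma nerve_sigma_delta {C : Type*} [Category C] (n : ℕ)
    (i j : Fin (n+1)) (hij : i ≤ j) (x : nerve C _⦋n⦌) (ω : nerve C _⦋n+2⦌)
    (hd : (nerve C).δ (i.castSucc.castSucc) ω = (nerve C).σ j x) :
    (nerve C).σ j.succ ((nerve C).δ j.succ.castSucc ω) = ω := by
    set p : Fin (n+3) := j.succ.castSucc with hp
    set q : Fin (n+3) := j.succ.succ with hq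
    set r : Fin (n+3) → Fin (n+3) := fun a => p.succAbove (j.succ.predAbove a) with hrdef
    have hpval : (p : ℕ) = (j:ℕ)+1 := by simp [hp]
    have hqval : (q : ℕ) = (j:ℕ)+2 := by simp [hq]
    have hval : ∀ a : Fin (n+3), ((r a) : ℕ) = if (a:ℕ) = (j:ℕ)+1 then (j:ℕ)+2 else a := by
      intro a
      rcases Nat.lt_trichotomy (a:ℕ) ((j:ℕ)+1) with h | h | h
      · rw [hrdef]
        simp only []
        rw [Fin.predAbove_of_le_castSucc _ _
              (by simp only [Fin.le_def, Fin.coe_castSucc, Fin.val_succ]; omega),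
          Fin.succAbove_of_castSucc_lt _ _
              (by simp only [Fin.lt_def, Fin.coe_castSucc, Fin.coe_castPred]; omega),
          if_neg (by omega)]
        simp only [Fin.coe_castSucc, Fin.coe_castPred]
      · rw [hrdef]
        simp only []
        rw [Fin.predAbove_of_le_castSucc _ _
              (by simp only [Fin.le_def, Fin.coe_castSucc, Fin.val_succ]; omega),
          Fin.succAbove_of_le_castSucc _ _
              (by simp only [Fin.le_def, Fin.coe_castSucc, Fin.coe_castPred]; omega),
          if_pos h]
        simp only [Fin.val_succ, Fin.coe_castPred]; omega
      · rw [hrdef]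
        simp only []
        rw [Fin.predAbove_of_castSucc_lt _ _
              (by simp only [Fin.lt_def, Fin.coe_castSucc, Fin.val_succ]; omega),
          Fin.succAbove_of_le_castSucc _ _
              (by simp only [Fin.le_def, Fin.coe_castSucc, Fin.coe_pred, hpval]; omega),
          if_neg (by omega)]
        simp only [Fin.val_succ, Fin.coe_pred]; omega
    have hr : ∀ a : Fin (n+3), a ≠ p → r a = a := by
      intro a ha
      have hav : (a:ℕ) ≠ (j:ℕ)+1 := by
        intro h; exact ha (Fin.ext (by rw [hpval, h]))
      exact Fin.ext (by rw [hval a, if_neg hav])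
    have hrp : r p = q := Fin.ext (by rw [hval p, if_pos hpval, hqval])
    have hrmono : ∀ a b : Fin (n+3), a ≤ b → r a ≤ r b := by
      intro a b hab
      rw [Fin.le_def] at hab ⊢
      rw [hval a, hval b]
      split_ifs <;> omega
    have hple : p ≤ q := by rw [Fin.le_def]; omega
    -- key facts from hd
    have E1 : ω.obj (i.castSucc.castSucc.succAbove j.castSucc) = x.obj (j.predAbove j.castSucc) :=
      Functor.congr_obj hd j.castSucc
    have E2 : ω.obj (i.castSucc.castSucc.succAbove j.succ) = x.obj (j.predAbove j.succ) :=
      Functor.congr_obj hd j.succ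
    have e1 : i.castSucc.castSucc.succAbove j.castSucc = p := by
      rw [Fin.succAbove_of_le_castSucc _ _
        (by simp only [Fin.le_def, Fin.coe_castSucc]; omega)]
      exact Fin.ext (by simp [hpval])
    have e2 : i.castSucc.castSucc.succAbove j.succ = q := by
      rw [Fin.succAbove_of_le_castSucc _ _
        (by simp only [Fin.le_def, Fin.coe_castSucc, Fin.val_succ]; omega)]
    have e3 : j.predAbove j.castSucc = j := Fin.predAbove_castSucc_self j
    have e4 : j.predAbove j.succ = j := Fin.predAbove_succ_self j
    have hobjp : ω.obj p = x.obj j := by rw [e1, e3] at E1; exact E1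
    have hobjq : ω.obj q = x.obj j := by rw [e2, e4] at E2; exact E2
    have hobjpq : ω.obj p = ω.obj q := hobjp.trans hobjq.symm
    have hmap : ω.map (homOfLE hple) = eqToHom hobjpq := by
      have H1 : i.castSucc.castSucc.succAbove j.castSucc ≤ i.castSucc.castSucc.succAbove j.succ := by
        rw [e1, e2]; exact hple
      have H2 : j.predAbove j.castSucc ≤ j.predAbove j.succ := by rw [e3, e4]
      have h4' : ω.map (homOfLE H1) = eqToHom E1 ≫ x.map (homOfLE H2) ≫ eqToHom E2.symm :=
        Functor.congr_hom hd (homOfLE (Fin.castSucc_le_succ j))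
      rw [map_eq_helper ω e1 e2 H1 hple, map_eq_helper x e3 e4 H2 (le_refl j),
        show x.map (homOfLE (le_refl j)) = 𝟙 _ from x.map_id j] at h4'
      simp only [Category.id_comp, Category.comp_id, Category.assoc, eqToHom_trans,
        eqToHom_trans_assoc] at h4'
      rw [eqToHom_comp_iff, comp_eqToHom_iff] at h4'
      rw [h4']
      simp
    have hobj : ∀ a : Fin (n+3), ω.obj (r a) = ω.obj a := by
      intro a
      by_cases ha : a = p
      · subst ha; rw [hrp]; exact hobjpq.symm
      · rw [hr a ha]
    have M : ∀ (a b : Fin (n+3)) (hab : a ≤ b),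
        ω.map (homOfLE (hrmono a b hab)) =
          eqToHom (hobj a) ≫ ω.map (homOfLE hab) ≫ eqToHom (hobj b).symm := by
      intro a b hab
      by_cases ha : a = p
      · subst ha
        by_cases hb : b = p
        · subst hb
          rw [map_eq_helper ω hrp hrp _ (le_refl q),
            show ω.map (homOfLE (le_refl q)) = 𝟙 _ from ω.map_id q,
            show ω.map (homOfLE hab) = 𝟙 _ from ω.map_id p]
          simp
        · have hqb : q ≤ b := by
            rw [Fin.le_def] at hab ⊢
            rw [hqval]
            have : (b:ℕ) ≠ (j:ℕ)+1 := fun h => hb (Fin.ext (by rw [h, hpval]))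
            omega
          rw [map_eq_helper ω hrp (hr b hb) _ hqb,
            show ω.map (homOfLE hab) = ω.map (homOfLE hple ≫ homOfLE hqb) from rfl,
            ω.map_comp, hmap]
          simp
      · by_cases hb : b = p
        · subst hb
          rw [map_eq_helper ω (hr a ha) hrp _ (hab.trans hple),
            show ω.map (homOfLE (hab.trans hple)) = ω.map (homOfLE hab ≫ homOfLE hple) from rfl,
            ω.map_comp, hmap]
          simp
        · rw [map_eq_helper ω (hr a ha) (hr b hb) _ hab]
    show ((nerve C).σ j.succ ((nerve C).δ j.succ.castSucc ω) : ComposableArrows C (n+2)) = ω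
    exact CategoryTheory.Functor.ext (h_obj := fun a => hobj a) (h_map := fun a b f => M a b (leOfHom f))

/-- Semi-perfectness of nerves (DS case): if `σ ∈ N_n C`, `ω ∈ N_{n+2} C` and
`d_{n+2,i} ω = s_{n,j} σ` for some `0 ≤ i ≤ j ≤ n`, then there is a unique
`ζ ∈ N_{n+1} C` with `d_{n+1,i} ζ = σ` and `s_{n+1,j+1} ζ = ω`. -/
theorem nerve_DS_semiperfectness {C : Type*} [Category C] (n : ℕ)
    (i j : Fin (n+1)) (hij : i ≤ j) (x : nerve C _⦋n⦌) (ω : nerve C _⦋n+2⦌)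
    (hd : (nerve C).δ (i.castSucc.castSucc) ω = (nerve C).σ j x) :
    ∃! ζ : nerve C _⦋n+1⦌,
      (nerve C).δ i.castSucc ζ = x ∧ (nerve C).σ j.succ ζ = ω := by
  refine ⟨(nerve C).δ j.succ.castSucc ω, ⟨?_, ?_⟩, ?_⟩
  · have h1 := ConcreteCategory.congr_hom ((nerve C).δ_comp_δ (i := i.castSucc) (j := j.castSucc)
      (by simpa using hij)) ω
    simp only [types_comp_apply] at h1
    rw [show (j.castSucc).succ = j.succ.castSucc from rfl] at h1
    rw [h1, hd]
    exact ConcreteCategory.congr_hom ((nerve C).δ_comp_σ_self (i := j)) x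
  · exact nerve_sigma_delta n i j hij x ω hd
  · rintro ζ' ⟨-, hσ⟩
    have := ConcreteCategory.congr_hom ((nerve C).δ_comp_σ_self (i := j.succ)) ζ'
    simp only [types_comp_apply, types_id_apply] at this
    rw [← hσ, this]
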